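/- Let S be a symplectic linear operator on ℂ^{2n} with an eigenvalue σ with Im σ ≠ 0 and |σ| = 1. Then the conjugate σ̄ is also an eigenvalue of S, and the sum of generalized eigenspaces L = S_σ ⊕ S_{σ̄} is a symplectic subspace (the restriction of the symplectic form to L is nondegenerate). -/

import Mathlib

open Complex

/-- Model of standard complex symplectic space ℂ^{2n}: pairs (p, q) with p, q ∈ ℂ^n. -/
abbrev SympC (n : ℕ) := (Fin n → ℂ) × (Fin n → ℂ)

/-- The standard symplectic bilinear form on ℂ^{2n}. -/
noncomputable def omegaStd {n : ℕ} (x y : SympC n) : ℂ :=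
  ∑ i, (x.1 i * y.2 i - x.2 i * y.1 i)

/-- Componentwise complex conjugation (the real structure) on ℂ^{2n}. -/
def conjStd {n : ℕ} (x : SympC n) : SympC n :=
  (fun i => star (x.1 i), fun i => star (x.2 i))

lemma omega_add_left {n : ℕ} (x x' y : SympC n) :
    omegaStd (x + x') y = omegaStd x y + omegaStd x' y := by
  simp only [omegaStd, Prod.fst_add, Prod.snd_add, Pi.add_apply]
  rw [← Finset.sum_add_distrib]
  exact Finset.sum_congr rfl fun i _ => by ring

lemma omega_add_right {n : ℕ} (x y y' : SympC n) :
    omegaStd x (y + y') = omegaStd x y + omegaStd x y' := by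
  simp only [omegaStd, Prod.fst_add, Prod.snd_add, Pi.add_apply]
  rw [← Finset.sum_add_distrib]
  exact Finset.sum_congr rfl fun i _ => by ring

lemma omega_smul_left {n : ℕ} (c : ℂ) (x y : SympC n) :
    omegaStd (c • x) y = c * omegaStd x y := by
  simp only [omegaStd, Prod.smul_fst, Prod.smul_snd, Pi.smul_apply, smul_eq_mul,
    Finset.mul_sum]
  exact Finset.sum_congr rfl fun i _ => by ring

lemma omega_smul_right {n : ℕ} (c : ℂ) (x y : SympC n) :
    omegaStd x (c • y) = c * omegaStd x y := by
  simp only [omegaStd, Prod.smul_fst, Prod.smul_snd, Pi.smul_apply, smul_eq_mul,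
    Finset.mul_sum]
  exact Finset.sum_congr rfl fun i _ => by ring

lemma omega_zero_left {n : ℕ} (y : SympC n) : omegaStd (0 : SympC n) y = 0 := by
  simp [omegaStd]

lemma omega_zero_right {n : ℕ} (x : SympC n) : omegaStd x (0 : SympC n) = 0 := by
  simp [omegaStd]

/-- Nondegeneracy of the standard symplectic form. -/
lemma omega_nondeg {n : ℕ} (x : SympC n) (h : ∀ y, omegaStd x y = 0) : x = 0 := by
  have h1 : ∀ i, x.1 i = 0 := by
    intro i
    have := h ((0 : Fin n → ℂ), Pi.single i 1)
    simpa [omegaStd, Pi.single_apply, Finset.mul_sum, mul_ite] using this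
  have h2 : ∀ i, x.2 i = 0 := by
    intro i
    have := h (Pi.single i 1, (0 : Fin n → ℂ))
    have h' : -(x.2 i) = 0 := by
      simpa [omegaStd, Pi.single_apply, mul_ite] using this
    exact neg_eq_zero.mp h'
  ext i
  · exact h1 i
  · exact h2 i

/-- Key orthogonality: generalized eigenvectors for α, β with αβ ≠ 1 are ω-orthogonal. -/
lemma omega_gen_orth {n : ℕ} (S : Module.End ℂ (SympC n))
    (hsymp : ∀ x y, omegaStd (S x) (S y) = omegaStd x y) (α β : ℂ) (hαβ : α * β ≠ 1) :
    ∀ (N k l : ℕ) (u v : SympC n), k + l ≤ N →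
      ((S - α • 1) ^ k) u = 0 → ((S - β • 1) ^ l) v = 0 → omegaStd u v = 0 := by
  intro N
  induction N with
  | zero =>
    intro k l u v hkl hu hv
    have hk : k = 0 := by omega
    subst hk
    simp only [pow_zero, Module.End.one_apply] at hu
    rw [hu, omega_zero_left]
  | succ N ih =>
    intro k l u v hkl hu hv
    match k, l with
    | 0, _ =>
      simp only [pow_zero, Module.End.one_apply] at hu
      rw [hu, omega_zero_left]
    | _ + 1, 0 =>
      simp only [pow_zero, Module.End.one_apply] at hv
      rw [hv, omega_zero_right]
    | k' + 1, l' + 1 =>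
      set u' : SympC n := (S - α • 1) u with hu'def
      set v' : SympC n := (S - β • 1) v with hv'def
      have hu' : ((S - α • 1) ^ k') u' = 0 := by
        rw [hu'def, ← Module.End.mul_apply, ← pow_succ]; exact hu
      have hv' : ((S - β • 1) ^ l') v' = 0 := by
        rw [hv'def, ← Module.End.mul_apply, ← pow_succ]; exact hv
      have hSu : S u = α • u + u' := by
        rw [hu'def]; simp [LinearMap.sub_apply]
      have hSv : S v = β • v + v' := by
        rw [hv'def]; simp [LinearMap.sub_apply]
      have e1 : omegaStd u v' = 0 :=
        ih (k' + 1) l' u v' (by omega) hu hv'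
      have e2 : omegaStd u' v = 0 :=
        ih k' (l' + 1) u' v (by omega) hu' hv
      have e3 : omegaStd u' v' = 0 :=
        ih k' l' u' v' (by omega) hu' hv'
      have key : omegaStd u v = α * β * omegaStd u v := by
        conv_lhs => rw [← hsymp u v, hSu, hSv]
        rw [omega_add_left, omega_add_right, omega_add_right, omega_smul_left,
          omega_smul_left, omega_smul_right, omega_smul_right, e1, e2, e3]
        ring
      have : (1 - α * β) * omegaStd u v = 0 := by linear_combination key
      rcases mul_eq_zero.mp this with h | h
      · exact absurd (by linear_combination -h) hαβ
      · exact h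

/-- for a (real) symplectic operator S on ℂ^{2n} with a non-real
eigenvalue σ of modulus 1, the conjugate σ̄ is also an eigenvalue, and the sum of
the generalized eigenspaces L = S_σ ⊕ S_σ̄ is a symplectic subspace (the restriction
of ω to L is nondegenerate). -/
theorem conjugate_eigenvalue_and_symplectic_subspace
    {n : ℕ} (S : Module.End ℂ (SympC n))
    (hsymp : ∀ x y, omegaStd (S x) (S y) = omegaStd x y)
    (hreal : ∀ x, S (conjStd x) = conjStd (S x))
    (σ : ℂ) (hσ : Module.End.HasEigenvalue S σ)
    (hIm : σ.im ≠ 0) (habs : ‖σ‖ = 1) :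
    Module.End.HasEigenvalue S (starRingEnd ℂ σ) ∧
    (∀ x ∈ S.maxGenEigenspace σ ⊔ S.maxGenEigenspace (starRingEnd ℂ σ),
      (∀ y ∈ S.maxGenEigenspace σ ⊔ S.maxGenEigenspace (starRingEnd ℂ σ),
        omegaStd x y = 0) → x = 0) := by
  have hσσ : σ * starRingEnd ℂ σ = 1 := by
    rw [Complex.mul_conj]
    norm_cast
    rw [Complex.normSq_eq_norm_sq, habs]; norm_num
  constructor
  · -- σ̄ is an eigenvalue
    obtain ⟨v, hv⟩ := hσ.exists_hasEigenvector
    have hvmem : S v = σ • v := Module.End.mem_eigenspace_iff.mp hv.1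
    refine Module.End.hasEigenvalue_of_hasEigenvector (x := conjStd v) ⟨?_, ?_⟩
    · rw [Module.End.mem_eigenspace_iff, hreal, hvmem]
      ext i <;> simp [conjStd, Prod.smul_fst, Prod.smul_snd, mul_comm]
    · intro hc
      apply hv.2
      have : conjStd (conjStd v) = v := by
        ext i <;> simp [conjStd]
      rw [← this, hc]
      ext i <;> simp [conjStd]
  · -- nondegeneracy
    intro x hx hxy
    apply omega_nondeg
    intro y
    -- x belongs to L; orthogonality with all generalized eigenspaces outside {σ, σ̄}
    have hx_orth : ∀ τ : ℂ, τ ≠ σ → τ ≠ starRingEnd ℂ σ →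
        ∀ z ∈ S.maxGenEigenspace τ, omegaStd x z = 0 := by
      intro τ hτ1 hτ2 z hz
      obtain ⟨l, hl⟩ := (Module.End.mem_maxGenEigenspace S τ z).mp hz
      obtain ⟨a, ha, b, hb, rfl⟩ := Submodule.mem_sup.mp hx
      obtain ⟨k1, hk1⟩ := (Module.End.mem_maxGenEigenspace S σ a).mp ha
      obtain ⟨k2, hk2⟩ := (Module.End.mem_maxGenEigenspace S (starRingEnd ℂ σ) b).mp hb
      have hστ : σ * τ ≠ 1 := by
        intro h
        apply hτ2
        have hσ0 : σ ≠ 0 := by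
          intro h0; rw [h0] at habs; simp at habs
        field_simp at h hσσ
        rw [← h] at hσσ
        exact mul_left_cancel₀ hσ0 hσσ.symm
      have hσ'τ : starRingEnd ℂ σ * τ ≠ 1 := by
        intro h
        apply hτ1
        have hσ0 : starRingEnd ℂ σ ≠ 0 := by
          intro h0
          rw [h0, mul_zero] at hσσ; exact one_ne_zero hσσ.symm
        rw [mul_comm] at hσσ
        rw [← h] at hσσ
        exact mul_left_cancel₀ hσ0 hσσ.symm
      rw [omega_add_left]
      rw [omega_gen_orth S hsymp σ τ hστ (k1 + l) k1 l a z le_rfl hk1 hl,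
        omega_gen_orth S hsymp (starRingEnd ℂ σ) τ hσ'τ (k2 + l) k2 l b z le_rfl hk2 hl]
      ring
    -- decompose y over all generalized eigenspaces
    have hy : y ∈ ⨆ τ : ℂ, S.maxGenEigenspace τ := by
      rw [Module.End.iSup_maxGenEigenspace_eq_top]
      trivial
    induction hy using Submodule.iSup_induction' with
    | mem τ z hz =>
      by_cases hτ1 : τ = σ
      · exact hxy z (Submodule.mem_sup_left (hτ1 ▸ hz))
      by_cases hτ2 : τ = starRingEnd ℂ σ
      · exact hxy z (Submodule.mem_sup_right (hτ2 ▸ hz))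
      exact hx_orth τ hτ1 hτ2 z hz
    | zero => exact omega_zero_right x
    | add z w _ _ hz hw => rw [omega_add_right, hz, hw, add_zero]
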